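/- Let N ≥ 3 and let W(x) = (1 + |x|²/(N(N-2)))^{-(N-2)/2} on ℝ^N. Then W satisfies the elliptic equation ΔW + W^{(N+2)/(N-2)} = 0 on ℝ^N. -/

import Mathlib

open Real

/-- Partial derivative in direction `i`. -/
noncomputable def pd {N : ℕ} (f : EuclideanSpace ℝ (Fin N) → ℝ) (i : Fin N)
    (x : EuclideanSpace ℝ (Fin N)) : ℝ :=
  fderiv ℝ f x (EuclideanSpace.single i 1)

/-- The Laplacian as the sum of second partial derivatives. -/
noncomputable def lap {N : ℕ} (f : EuclideanSpace ℝ (Fin N) → ℝ)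
    (x : EuclideanSpace ℝ (Fin N)) : ℝ :=
  ∑ i, pd (pd f i) i x

/-- The Aubin–Talenti ground state `W(x) = (1 + |x|²/(N(N-2)))^{-(N-2)/2}`. -/
noncomputable def groundStateW (N : ℕ) (x : EuclideanSpace ℝ (Fin N)) : ℝ :=
  (1 + ‖x‖ ^ 2 / ((N : ℝ) * ((N : ℝ) - 2))) ^ (-(((N : ℝ) - 2) / 2))

section Aux

variable {N : ℕ} {c : ℝ}

lemma aux_u_deriv (c : ℝ) (x : EuclideanSpace ℝ (Fin N)) :
    HasFDerivAt (fun y : EuclideanSpace ℝ (Fin N) => 1 + ‖y‖ ^ 2 / c)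
      ((2 / c) • (innerSL ℝ x)) x := by
  have h1 : HasFDerivAt (fun y : EuclideanSpace ℝ (Fin N) => ‖y‖ ^ 2)
      (2 • (innerSL ℝ x)) x := by
    simpa using (hasFDerivAt_id x).norm_sq
  have h2 := (h1.const_mul (1 / c)).const_add (1 : ℝ)
  have heq : (fun y : EuclideanSpace ℝ (Fin N) => 1 + (1 / c) * ‖y‖ ^ 2)
      = fun y : EuclideanSpace ℝ (Fin N) => 1 + ‖y‖ ^ 2 / c := by
    funext y; ring
  rw [heq] at h2
  refine h2.congr_fderiv ?_
  ext v
  simp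
  ring

lemma aux_pow_deriv (hc : (0 : ℝ) < c) (q : ℝ) (x : EuclideanSpace ℝ (Fin N)) :
    HasFDerivAt (fun y : EuclideanSpace ℝ (Fin N) => (1 + ‖y‖ ^ 2 / c) ^ q)
      ((q * (1 + ‖x‖ ^ 2 / c) ^ (q - 1) * (2 / c)) • (innerSL ℝ x)) x := by
  have hpos : (0 : ℝ) < 1 + ‖x‖ ^ 2 / c := by positivity
  have h := (aux_u_deriv c x).rpow_const (p := q) (Or.inl (ne_of_gt hpos))
  rw [smul_smul] at h
  exact h

lemma inner_single_one (i : Fin N) (x : EuclideanSpace ℝ (Fin N)) :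
    (inner ℝ x (EuclideanSpace.single i 1) : ℝ) = x i := by
  rw [show ((EuclideanSpace.single i 1 : EuclideanSpace ℝ (Fin N))
      = EuclideanSpace.single i ((1:ℝ):ℝ)) from rfl, EuclideanSpace.inner_single_right]
  simp

lemma pd_pow (hc : (0 : ℝ) < c) (q : ℝ) (i : Fin N) (x : EuclideanSpace ℝ (Fin N)) :
    pd (fun y : EuclideanSpace ℝ (Fin N) => (1 + ‖y‖ ^ 2 / c) ^ q) i x
      = q * (1 + ‖x‖ ^ 2 / c) ^ (q - 1) * (2 / c) * x i := by
  rw [pd, (aux_pow_deriv hc q x).fderiv]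
  simp only [ContinuousLinearMap.smul_apply, innerSL_apply_apply, smul_eq_mul]
  rw [inner_single_one]

end Aux

/-- `W` solves the critical elliptic equation `ΔW + W^{(N+2)/(N-2)} = 0` on `ℝ^N`. -/
theorem groundState_solves_elliptic (N : ℕ) (hN : 3 ≤ N)
    (x : EuclideanSpace ℝ (Fin N)) :
    lap (groundStateW N) x
      + (groundStateW N x) ^ (((N : ℝ) + 2) / ((N : ℝ) - 2)) = 0 := by
  have hN3 : (3 : ℝ) ≤ (N : ℝ) := by exact_mod_cast hN
  set c : ℝ := (N : ℝ) * ((N : ℝ) - 2) with hc_def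
  have hc : (0 : ℝ) < c := by
    apply mul_pos <;> linarith
  set p : ℝ := ((N : ℝ) - 2) / 2 with hp_def
  set a : ℝ := 1 + ‖x‖ ^ 2 / c with ha_def
  have ha : (0 : ℝ) < a := by rw [ha_def]; positivity
  -- first derivative of W
  have hW : groundStateW N = fun y : EuclideanSpace ℝ (Fin N) =>
      (1 + ‖y‖ ^ 2 / c) ^ (-p) := rfl
  have hpd1 : ∀ i : Fin N, pd (groundStateW N) i
      = fun y : EuclideanSpace ℝ (Fin N) =>
        ((-p) * (2 / c)) * ((1 + ‖y‖ ^ 2 / c) ^ (-p - 1) * y i) := by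
    intro i
    funext y
    rw [hW, pd_pow hc]
    ring
  -- second derivative
  have hpd2 : ∀ i : Fin N, pd (pd (groundStateW N) i) i x
      = ((-p) * (2 / c)) * (a ^ (-p - 1)
          + ((-p - 1) * a ^ (-p - 2) * (2 / c)) * (x i) ^ 2) := by
    intro i
    rw [hpd1 i]
    have h1 := aux_pow_deriv (N := N) hc (-p - 1) x
    have h2 : HasFDerivAt (fun y : EuclideanSpace ℝ (Fin N) => y i)
        (EuclideanSpace.proj i : EuclideanSpace ℝ (Fin N) →L[ℝ] ℝ) x :=
      (EuclideanSpace.proj i : EuclideanSpace ℝ (Fin N) →L[ℝ] ℝ).hasFDerivAt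
    have h3 := (h1.mul h2).const_mul ((-p) * (2 / c))
    rw [pd, HasFDerivAt.fderiv (f := fun y : EuclideanSpace ℝ (Fin N) =>
      -p * (2 / c) * ((1 + ‖y‖ ^ 2 / c) ^ (-p - 1) * y i)) h3]
    simp only [ContinuousLinearMap.smul_apply, ContinuousLinearMap.add_apply,
      ContinuousLinearMap.coe_smul', Pi.smul_apply, smul_eq_mul, innerSL_apply_apply]
    rw [inner_single_one]
    have hsing : (EuclideanSpace.proj i : EuclideanSpace ℝ (Fin N) →L[ℝ] ℝ)
        (EuclideanSpace.single i (1:ℝ)) = 1 := by simp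
    rw [hsing, show (-p - 1 - 1 : ℝ) = -p - 2 by ring, ← ha_def]
    ring
  -- sum up
  have hnorm : ‖x‖ ^ 2 = ∑ i, (x i) ^ 2 := by
    rw [EuclideanSpace.norm_eq, Real.sq_sqrt (by positivity)]
    simp [sq_abs]
  have hlap : lap (groundStateW N) x
      = ((-p) * (2 / c)) * ((N : ℝ) * a ^ (-p - 1)
          + ((-p - 1) * a ^ (-p - 2) * (2 / c)) * ‖x‖ ^ 2) := by
    rw [lap]
    simp only [hpd2]
    rw [← Finset.mul_sum]
    congr 1
    rw [Finset.sum_add_distrib, Finset.sum_const, Finset.card_univ, Fintype.card_fin,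
      ← Finset.mul_sum, ← hnorm, nsmul_eq_mul]
  rw [hlap]
  -- rewrite the nonlinear term
  have hN2 : (N : ℝ) - 2 ≠ 0 := by linarith
  have hWx : groundStateW N x = a ^ (-p) := rfl
  have hrw : (groundStateW N x) ^ (((N : ℝ) + 2) / ((N : ℝ) - 2)) = a ^ (-p - 2) := by
    rw [hWx, ← Real.rpow_mul ha.le]
    congr 1
    rw [hp_def]
    field_simp
    ring
  rw [hrw]
  have hsplit : a ^ (-p - 1) = a ^ (-p - 2) * a := by
    rw [show (-p - 1 : ℝ) = (-p - 2) + 1 by ring, Real.rpow_add ha, Real.rpow_one]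
  have hs : ‖x‖ ^ 2 = c * (a - 1) := by
    rw [ha_def]
    field_simp
    ring
  rw [hsplit, hs, hp_def, hc_def]
  have hNne : (N : ℝ) ≠ 0 := by linarith
  field_simp
  ring
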